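/- Let q₁, q₂, q₃, q₄ be rational numbers and let M be a 2×2 integer matrix with determinant 1 such that q₁ = M₁₁·q₃ + M₁₂·q₄ and q₂ = M₂₁·q₃ + M₂₂·q₄. If lcm(den(q₁), den(q₂)) = lcm(den(q₃), den(q₄)), then gcd(num(q₁), num(q₂)) = gcd(num(q₃), num(q₄)). -/

import Mathlib

private lemma gcd_step (a b x y m00 m01 m10 m11 : ℤ)
    (hdet : m00 * m11 - m01 * m10 = 1)
    (ha : a = m00 * x + m01 * y) (hb : b = m10 * x + m11 * y) :
    Int.gcd a b = Int.gcd x y := by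
  have hx : x = m11 * a - m01 * b := by rw [ha, hb]; linear_combination (-x) * hdet
  have hy : y = m00 * b - m10 * a := by rw [ha, hb]; linear_combination (-y) * hdet
  apply Nat.dvd_antisymm
  · have h1 : (↑(Int.gcd a b) : ℤ) ∣ x := hx ▸ dvd_sub (Dvd.dvd.mul_left (Int.gcd_dvd_left _ _) _)
      (Dvd.dvd.mul_left (Int.gcd_dvd_right _ _) _)
    have h2 : (↑(Int.gcd a b) : ℤ) ∣ y := hy ▸ dvd_sub (Dvd.dvd.mul_left (Int.gcd_dvd_right _ _) _)
      (Dvd.dvd.mul_left (Int.gcd_dvd_left _ _) _)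
    exact Int.natCast_dvd_natCast.mp (Int.dvd_coe_gcd h1 h2)
  · have h1 : (↑(Int.gcd x y) : ℤ) ∣ a := ha ▸ dvd_add (Dvd.dvd.mul_left (Int.gcd_dvd_left _ _) _)
      (Dvd.dvd.mul_left (Int.gcd_dvd_right _ _) _)
    have h2 : (↑(Int.gcd x y) : ℤ) ∣ b := hb ▸ dvd_add (Dvd.dvd.mul_left (Int.gcd_dvd_left _ _) _)
      (Dvd.dvd.mul_left (Int.gcd_dvd_right _ _) _)
    exact Int.natCast_dvd_natCast.mp (Int.dvd_coe_gcd h1 h2)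

private lemma gcd_scale (n₁ n₂ : ℤ) (d₁ d₂ : ℕ) (hd₁ : 0 < d₁) (hd₂ : 0 < d₂)
    (h₁ : n₁.natAbs.Coprime d₁) (h₂ : n₂.natAbs.Coprime d₂) :
    Int.gcd (n₁ * (Nat.lcm d₁ d₂ / d₁ : ℕ)) (n₂ * (Nat.lcm d₁ d₂ / d₂ : ℕ)) = Int.gcd n₁ n₂ := by
  set L := Nat.lcm d₁ d₂ with hL
  have hLd₁ : d₁ ∣ L := Nat.dvd_lcm_left _ _
  have hLd₂ : d₂ ∣ L := Nat.dvd_lcm_right _ _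
  have hk₁ : L / d₁ * d₁ = L := Nat.div_mul_cancel hLd₁
  have hk₂ : L / d₂ * d₂ = L := Nat.div_mul_cancel hLd₂
  have hLpos : 0 < L := Nat.pos_of_ne_zero (Nat.lcm_ne_zero hd₁.ne' hd₂.ne')
  have hk₁d₂ : L / d₁ ∣ d₂ := by
    rw [← Nat.mul_dvd_mul_iff_right hd₁, hk₁, Nat.mul_comm d₂ d₁]
    exact Nat.lcm_dvd_mul d₁ d₂
  have hk₂d₁ : L / d₂ ∣ d₁ := by
    rw [← Nat.mul_dvd_mul_iff_right hd₂, hk₂]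
    exact Nat.lcm_dvd_mul d₁ d₂
  have hkk : Nat.Coprime (L / d₁) (L / d₂) := by
    have hg₁ : Nat.gcd (L / d₁) (L / d₂) ∣ L / d₁ := Nat.gcd_dvd_left _ _
    have hg₂ : Nat.gcd (L / d₁) (L / d₂) ∣ L / d₂ := Nat.gcd_dvd_right _ _
    set g := Nat.gcd (L / d₁) (L / d₂) with hg
    have hgL : g ∣ L := dvd_trans hg₁ (Nat.div_dvd_of_dvd hLd₁)
    have h1 : d₁ * g ∣ L := by
      obtain ⟨c, hc⟩ := hg₁
      exact ⟨c, by rw [← hk₁, hc]; ring⟩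
    have h2 : d₂ * g ∣ L := by
      obtain ⟨c, hc⟩ := hg₂
      exact ⟨c, by rw [← hk₂, hc]; ring⟩
    have hd1 : d₁ ∣ L / g := (Nat.dvd_div_iff_mul_dvd hgL).mpr (by rwa [Nat.mul_comm] at h1)
    have hd2 : d₂ ∣ L / g := (Nat.dvd_div_iff_mul_dvd hgL).mpr (by rwa [Nat.mul_comm] at h2)
    have hLdvd : L ∣ L / g := Nat.lcm_dvd hd1 hd2
    have heq : L / g = L := Nat.dvd_antisymm (Nat.div_dvd_of_dvd hgL) hLdvd
    have hLg : L = g * L := Nat.eq_mul_of_div_eq_right hgL heq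
    have : g * L = 1 * L := by rw [one_mul]; exact hLg.symm
    exact Nat.eq_of_mul_eq_mul_right hLpos this
  have hc₁ : Nat.Coprime (L / d₁) n₂.natAbs := Nat.Coprime.coprime_dvd_left hk₁d₂ h₂.symm
  have hc₂ : Nat.Coprime (L / d₂) n₁.natAbs := Nat.Coprime.coprime_dvd_left hk₂d₁ h₁.symm
  rw [Int.gcd, Int.gcd, Int.natAbs_mul, Int.natAbs_mul, Int.natAbs_natCast, Int.natAbs_natCast]
  rw [Nat.Coprime.gcd_mul_right_cancel _ (Nat.Coprime.mul_right hc₁ hkk)]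
  rw [Nat.Coprime.gcd_mul_right_cancel_right _ (Nat.Coprime.coprime_dvd_left hk₂d₁ h₁.symm)]

private lemma cast_scale (q : ℚ) (L : ℕ) (h : q.den ∣ L) :
    ((q.num * (L / q.den : ℕ) : ℤ) : ℚ) = (L : ℚ) * q := by
  obtain ⟨k, hk⟩ := h
  have hdiv : L / q.den = k := by rw [hk, Nat.mul_div_cancel_left _ q.pos]
  have h2 : q * (q.den : ℚ) = (q.num : ℚ) := Rat.mul_den_eq_num q
  rw [hdiv, hk]
  push_cast
  linear_combination (-(k : ℚ)) * h2

/-- If two pairs of rationals are related by an `SL(2,ℤ)` matrix and the lcm's of their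
denominators agree, then the gcd's of their numerators agree. -/
theorem gcd_num_eq_of_SL2 (q₁ q₂ q₃ q₄ : ℚ) (M : Matrix (Fin 2) (Fin 2) ℤ)
    (hdet : M.det = 1)
    (h₁ : q₁ = (M 0 0 : ℚ) * q₃ + (M 0 1 : ℚ) * q₄)
    (h₂ : q₂ = (M 1 0 : ℚ) * q₃ + (M 1 1 : ℚ) * q₄)
    (hlcm : Nat.lcm q₁.den q₂.den = Nat.lcm q₃.den q₄.den) :
    Int.gcd q₁.num q₂.num = Int.gcd q₃.num q₄.num := by
  set L := Nat.lcm q₃.den q₄.den with hL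
  have hdet' : M 0 0 * M 1 1 - M 0 1 * M 1 0 = 1 := by
    rw [← Matrix.det_fin_two M]; exact hdet
  have hd₁ : q₁.den ∣ L := by rw [← hlcm]; exact Nat.dvd_lcm_left _ _
  have hd₂ : q₂.den ∣ L := by rw [← hlcm]; exact Nat.dvd_lcm_right _ _
  have hd₃ : q₃.den ∣ L := Nat.dvd_lcm_left _ _
  have hd₄ : q₄.den ∣ L := Nat.dvd_lcm_right _ _
  have e₁ : (q₁.num * (L / q₁.den : ℕ) : ℤ)
      = M 0 0 * (q₃.num * (L / q₃.den : ℕ)) + M 0 1 * (q₄.num * (L / q₄.den : ℕ)) := by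
    have h : ((q₁.num * (L / q₁.den : ℕ) : ℤ) : ℚ)
        = (M 0 0 : ℚ) * ((q₃.num * (L / q₃.den : ℕ) : ℤ) : ℚ)
          + (M 0 1 : ℚ) * ((q₄.num * (L / q₄.den : ℕ) : ℤ) : ℚ) := by
      rw [cast_scale _ _ hd₁, cast_scale _ _ hd₃, cast_scale _ _ hd₄]
      linear_combination (L : ℚ) * h₁
    exact_mod_cast h
  have e₂ : (q₂.num * (L / q₂.den : ℕ) : ℤ)
      = M 1 0 * (q₃.num * (L / q₃.den : ℕ)) + M 1 1 * (q₄.num * (L / q₄.den : ℕ)) := by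
    have h : ((q₂.num * (L / q₂.den : ℕ) : ℤ) : ℚ)
        = (M 1 0 : ℚ) * ((q₃.num * (L / q₃.den : ℕ) : ℤ) : ℚ)
          + (M 1 1 : ℚ) * ((q₄.num * (L / q₄.den : ℕ) : ℤ) : ℚ) := by
      rw [cast_scale _ _ hd₂, cast_scale _ _ hd₃, cast_scale _ _ hd₄]
      linear_combination (L : ℚ) * h₂
    exact_mod_cast h
  have key : Int.gcd (q₁.num * (L / q₁.den : ℕ)) (q₂.num * (L / q₂.den : ℕ))
      = Int.gcd (q₃.num * (L / q₃.den : ℕ)) (q₄.num * (L / q₄.den : ℕ)) :=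
    gcd_step _ _ _ _ _ _ _ _ hdet' e₁ e₂
  have left : Int.gcd (q₁.num * (L / q₁.den : ℕ)) (q₂.num * (L / q₂.den : ℕ))
      = Int.gcd q₁.num q₂.num := by
    have := gcd_scale q₁.num q₂.num q₁.den q₂.den q₁.pos q₂.pos q₁.reduced q₂.reduced
    rwa [hlcm] at this
  have right : Int.gcd (q₃.num * (L / q₃.den : ℕ)) (q₄.num * (L / q₄.den : ℕ))
      = Int.gcd q₃.num q₄.num :=
    gcd_scale q₃.num q₄.num q₃.den q₄.den q₃.pos q₄.pos q₃.reduced q₄.reduced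
  rw [← left, key, right]
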